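/- Let H ≥ 1 be an integer and let X_1, …, X_H be independent random variables, each uniformly distributed on the unit circle {z ∈ ℂ : |z| = 1}, and set Z_H = X_1 + ⋯ + X_H. For non-negative integers k and l, E[Z_H^k · (conj Z_H)^l] equals B_k(H) if k = l, and equals 0 if k ≠ l. -/

import Mathlib

set_option maxHeartbeats 1000000

open MeasureTheory ProbabilityTheory Complex Finset

/-- The uniform probability measure on the unit circle `{z ∈ ℂ : |z| = 1}`. -/
noncomputable def uniformCircle : Measure ℂ :=
  Measure.map (fun t : ℝ => Complex.exp (2 * Real.pi * t * Complex.I))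
    (volume.restrict (Set.Icc 0 1))

/-- `B_k(H)`: the number of tuples `(y_1,…,y_k,z_1,…,z_k)` of integers in `{1,…,H}` such that
the multisets `{y_1,…,y_k}` and `{z_1,…,z_k}` coincide. -/
noncomputable def Bcount (k H : ℕ) : ℕ :=
  Nat.card {p : (Fin k → ℕ) × (Fin k → ℕ) //
    (∀ j, p.1 j ∈ Finset.Icc 1 H) ∧ (∀ j, p.2 j ∈ Finset.Icc 1 H) ∧
    Multiset.map p.1 Finset.univ.val = Multiset.map p.2 Finset.univ.val}

lemma measurable_circleMap' : Measurable (fun t : ℝ => Complex.exp (2 * Real.pi * t * Complex.I)) := by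
  fun_prop

lemma circle_moment (a b : ℕ) :
    ∫ z, z ^ a * (starRingEnd ℂ z) ^ b ∂uniformCircle = if a = b then 1 else 0 := by
  rw [uniformCircle, integral_map measurable_circleMap'.aemeasurable]
  · have key : ∀ t : ℝ,
        Complex.exp (2 * Real.pi * t * Complex.I) ^ a *
          (starRingEnd ℂ (Complex.exp (2 * Real.pi * t * Complex.I))) ^ b =
        Complex.exp ((((a : ℂ) - b) * (2 * Real.pi * Complex.I)) * t) := by
      intro t
      rw [← Complex.exp_conj]
      rw [← Complex.exp_nat_mul, ← Complex.exp_nat_mul, ← Complex.exp_add]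
      congr 1
      simp only [map_mul, Complex.conj_I, Complex.conj_ofReal, map_ofNat]
      ring
    simp only [key]
    rcases eq_or_ne a b with h | h
    · subst h
      simp only [sub_self, zero_mul, Complex.exp_zero, if_pos rfl]
      simp [integral_const, Real.volume_Icc]
    · rw [if_neg h]
      have hc : (((a : ℂ) - b) * (2 * Real.pi * Complex.I)) ≠ 0 := by
        apply mul_ne_zero
        · rw [sub_ne_zero]
          exact_mod_cast fun hh => h (Nat.cast_injective hh)
        · simp [Real.pi_ne_zero, Complex.I_ne_zero]
      rw [integral_Icc_eq_integral_Ioc, ← intervalIntegral.integral_of_le zero_le_one,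
        integral_exp_mul_complex hc]
      have : Complex.exp ((((a : ℂ) - b) * (2 * Real.pi * Complex.I)) * (1:ℝ)) = 1 := by
        have := Complex.exp_int_mul_two_pi_mul_I ((a : ℤ) - b)
        rw [← this]
        congr 1
        push_cast
        ring
      rw [this]
      simp
  · exact (Continuous.aestronglyMeasurable (by continuity))

lemma uniformCircle_abs_one : uniformCircle {z : ℂ | ‖z‖ = 1} = 1 := by
  rw [uniformCircle, Measure.map_apply measurable_circleMap']
  · have : (fun t : ℝ => Complex.exp (2 * Real.pi * t * Complex.I)) ⁻¹'
        {z : ℂ | ‖z‖ = 1} = Set.univ := by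
      ext t
      simp [Complex.norm_exp]
    rw [this]
    simp [Real.volume_Icc]
  · exact measurableSet_eq_fun continuous_norm.measurable measurable_const

lemma indepFun_integral_mul_complex {Ω : Type*} [MeasurableSpace Ω] {μ : Measure Ω}
    {X Y : Ω → ℂ} (h : IndepFun X Y μ) (hX : Integrable X μ) (hY : Integrable Y μ) :
    ∫ ω, (X * Y) ω ∂μ = (∫ ω, X ω ∂μ) * ∫ ω, Y ω ∂μ := by
  have h11 : IndepFun (fun ω => (X ω).re) (fun ω => (Y ω).re) μ :=
    h.comp Complex.measurable_re Complex.measurable_re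
  have h12 : IndepFun (fun ω => (X ω).re) (fun ω => (Y ω).im) μ :=
    h.comp Complex.measurable_re Complex.measurable_im
  have h21 : IndepFun (fun ω => (X ω).im) (fun ω => (Y ω).re) μ :=
    h.comp Complex.measurable_im Complex.measurable_re
  have h22 : IndepFun (fun ω => (X ω).im) (fun ω => (Y ω).im) μ :=
    h.comp Complex.measurable_im Complex.measurable_im
  have e11 : ∫ ω, (X ω).re * (Y ω).re ∂μ = (∫ ω, (X ω).re ∂μ) * ∫ ω, (Y ω).re ∂μ := by
    simpa [Pi.mul_apply] using h11.integral_mul_eq_mul_integral hX.re.aestronglyMeasurable hY.re.aestronglyMeasurable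
  have e12 : ∫ ω, (X ω).re * (Y ω).im ∂μ = (∫ ω, (X ω).re ∂μ) * ∫ ω, (Y ω).im ∂μ := by
    simpa [Pi.mul_apply] using h12.integral_mul_eq_mul_integral hX.re.aestronglyMeasurable hY.im.aestronglyMeasurable
  have e21 : ∫ ω, (X ω).im * (Y ω).re ∂μ = (∫ ω, (X ω).im ∂μ) * ∫ ω, (Y ω).re ∂μ := by
    simpa [Pi.mul_apply] using h21.integral_mul_eq_mul_integral hX.im.aestronglyMeasurable hY.re.aestronglyMeasurable
  have e22 : ∫ ω, (X ω).im * (Y ω).im ∂μ = (∫ ω, (X ω).im ∂μ) * ∫ ω, (Y ω).im ∂μ := by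
    simpa [Pi.mul_apply] using h22.integral_mul_eq_mul_integral hX.im.aestronglyMeasurable hY.im.aestronglyMeasurable
  have hXY : Integrable (X * Y) μ := h.integrable_mul hX hY
  have i11 : Integrable (fun ω => (X ω).re * (Y ω).re) μ := by
    exact h11.integrable_mul hX.re hY.re
  have i12 : Integrable (fun ω => (X ω).re * (Y ω).im) μ := by
    exact h12.integrable_mul hX.re hY.im
  have i21 : Integrable (fun ω => (X ω).im * (Y ω).re) μ := by
    exact h21.integrable_mul hX.im hY.re
  have i22 : Integrable (fun ω => (X ω).im * (Y ω).im) μ := by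
    exact h22.integrable_mul hX.im hY.im
  rw [show ∫ ω, (X * Y) ω ∂μ = ∫ ω, X ω * Y ω ∂μ from rfl]
  have hXY' : Integrable (fun ω => X ω * Y ω) μ := hXY
  rw [← integral_re_add_im hXY', ← integral_re_add_im hX, ← integral_re_add_im hY]
  simp only [RCLike.re_to_complex, RCLike.im_to_complex, Complex.mul_re, Complex.mul_im]
  rw [integral_sub i11 i22, integral_add i12 i21, e11, e12, e21, e22]
  have : (RCLike.I : ℂ) = Complex.I := rfl
  rw [this]
  push_cast
  ring_nf
  rw [Complex.I_sq]
  ring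

lemma iIndep_integral_prod {Ω : Type*} [MeasurableSpace Ω] {μ : Measure Ω}
    [IsProbabilityMeasure μ] {ι : Type*} (Y : ι → Ω → ℂ)
    (h : iIndepFun Y μ) (hm : ∀ i, Measurable (Y i))
    (hint : ∀ i, Integrable (Y i) μ) (s : Finset ι) :
    Integrable (fun ω => ∏ j ∈ s, Y j ω) μ ∧
      ∫ ω, ∏ j ∈ s, Y j ω ∂μ = ∏ j ∈ s, ∫ ω, Y j ω ∂μ := by
  classical
  induction s using Finset.induction_on with
  | empty => simp
  | @insert i s hi ih =>
    have hIndep : IndepFun (∏ j ∈ s, Y j) (Y i) μ :=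
      iIndepFun.indepFun_finset_prod_of_notMem h hm hi
    have hps : (fun ω => ∏ j ∈ s, Y j ω) = ∏ j ∈ s, Y j := by
      funext ω; simp
    have hint_prod : Integrable (∏ j ∈ s, Y j) μ := hps ▸ ih.1
    have hmul : Integrable ((∏ j ∈ s, Y j) * Y i) μ :=
      hIndep.integrable_mul hint_prod (hint i)
    have hmuleq : ∫ ω, ((∏ j ∈ s, Y j) * Y i) ω ∂μ =
        (∫ ω, (∏ j ∈ s, Y j) ω ∂μ) * ∫ ω, Y i ω ∂μ :=
      indepFun_integral_mul_complex hIndep hint_prod (hint i)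
    have heq : (fun ω => ∏ j ∈ insert i s, Y j ω) = (∏ j ∈ s, Y j) * Y i := by
      funext ω
      simp [Finset.prod_insert hi, mul_comm]
    constructor
    · rw [heq]; exact hmul
    · calc ∫ ω, ∏ j ∈ insert i s, Y j ω ∂μ
          = ∫ ω, ((∏ j ∈ s, Y j) * Y i) ω ∂μ := by rw [heq]
        _ = (∫ ω, (∏ j ∈ s, Y j) ω ∂μ) * ∫ ω, Y i ω ∂μ := hmuleq
        _ = ∏ j ∈ insert i s, ∫ ω, Y j ω ∂μ := by
            rw [Finset.prod_insert hi, ← hps, ih.2]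
            ring

lemma multiset_eq_iff_counts {k H : ℕ} (p q : Fin k → Fin H) :
    Multiset.map p Finset.univ.val = Multiset.map q Finset.univ.val ↔
      ∀ j, (univ.filter fun i => p i = j).card = (univ.filter fun i => q i = j).card := by
  classical
  rw [Multiset.ext]
  apply forall_congr'
  intro j
  rw [Multiset.count_map, Multiset.count_map]
  have key : ∀ r : Fin k → Fin H,
      Multiset.card (Multiset.filter (fun a => j = r a) Finset.univ.val) =
        (univ.filter fun i => r i = j).card := by
    intro r
    rw [← Multiset.countP_eq_card_filter, Finset.card, Finset.filter_val,
      ← Multiset.countP_eq_card_filter]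
    exact Multiset.countP_congr rfl (fun x _ => by simp [eq_comm])
  rw [key p, key q]

lemma Bcount_eq_card (k H : ℕ) :
    Bcount k H = Fintype.card {r : (Fin k → Fin H) × (Fin k → Fin H) //
      Multiset.map r.1 Finset.univ.val = Multiset.map r.2 Finset.univ.val} := by
  classical
  rw [Bcount, ← Nat.card_eq_fintype_card]
  have hι : Function.Injective (fun j : Fin H => (j : ℕ) + 1) := by
    intro a b hab
    simp only [add_left_inj] at hab
    exact Fin.val_injective hab
  apply Nat.card_congr
  refine { toFun := ?_, invFun := ?_, left_inv := ?_, right_inv := ?_ }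
  · rintro ⟨⟨p1, p2⟩, h1, h2, h3⟩
    dsimp only at h1 h2 h3
    refine ⟨(fun i => ⟨p1 i - 1, ?_⟩, fun i => ⟨p2 i - 1, ?_⟩), ?_⟩
    · have := Finset.mem_Icc.1 (h1 i); omega
    · have := Finset.mem_Icc.1 (h2 i); omega
    · apply Multiset.map_injective hι
      rw [Multiset.map_map, Multiset.map_map]
      refine (Multiset.map_congr rfl fun i _ => ?_).trans
        (h3.trans (Multiset.map_congr rfl fun i _ => ?_).symm)
      · have := Finset.mem_Icc.1 (h1 i)
        simp only [Function.comp_apply]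
        omega
      · have := Finset.mem_Icc.1 (h2 i)
        simp only [Function.comp_apply]
        omega
  · rintro ⟨⟨f1, f2⟩, h⟩
    dsimp only at h
    refine ⟨(fun i => (f1 i : ℕ) + 1, fun i => (f2 i : ℕ) + 1), fun i => ?_, fun i => ?_, ?_⟩
    · rw [Finset.mem_Icc]
      dsimp only
      have := (f1 i).isLt
      omega
    · rw [Finset.mem_Icc]
      dsimp only
      have := (f2 i).isLt
      omega
    · show Multiset.map ((fun j : Fin H => (j : ℕ) + 1) ∘ f1) _ =
        Multiset.map ((fun j : Fin H => (j : ℕ) + 1) ∘ f2) _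
      rw [← Multiset.map_map, ← Multiset.map_map, h]
  · rintro ⟨⟨p1, p2⟩, h1, h2, h3⟩
    dsimp only at h1 h2 h3
    apply Subtype.ext
    refine Prod.ext ?_ ?_ <;> funext i
    · have := Finset.mem_Icc.1 (h1 i)
      simp only []
      omega
    · have := Finset.mem_Icc.1 (h2 i)
      simp only []
      omega
  · rintro ⟨⟨f1, f2⟩, h⟩
    apply Subtype.ext
    refine Prod.ext ?_ ?_ <;> funext i <;> apply Fin.ext <;> simp

lemma Bcount_eq_filter_card (k H : ℕ) :
    Bcount k H = (univ.filter (fun r : (Fin k → Fin H) × (Fin k → Fin H) =>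
      ∀ j, (univ.filter fun i => r.1 i = j).card =
        (univ.filter fun i => r.2 i = j).card)).card := by
  classical
  rw [Bcount_eq_card, Fintype.card_subtype]
  have : (univ.filter (fun r : (Fin k → Fin H) × (Fin k → Fin H) =>
      Multiset.map r.1 Finset.univ.val = Multiset.map r.2 Finset.univ.val)) =
      (univ.filter (fun r : (Fin k → Fin H) × (Fin k → Fin H) =>
        ∀ j, (univ.filter fun i => r.1 i = j).card =
          (univ.filter fun i => r.2 i = j).card)) := by
    ext r
    simp only [Finset.mem_filter, Finset.mem_univ, true_and]
    exact multiset_eq_iff_counts r.1 r.2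
  rw [this]

/-- `E[Z_H^k conj(Z_H)^l]` equals `B_k(H)` if `k = l` and `0` otherwise,
where `Z_H = X_1 + ⋯ + X_H` with the `X_j` independent and uniform on the unit circle. -/
theorem mixed_moments_eq
    {Ω : Type*} [MeasurableSpace Ω] (μ : Measure Ω) [IsProbabilityMeasure μ]
    (H : ℕ) (hH : 1 ≤ H)
    (X : Fin H → Ω → ℂ)
    (hmeas : ∀ j, Measurable (X j))
    (hindep : iIndepFun X μ)
    (hunif : ∀ j, Measure.map (X j) μ = uniformCircle)
    (k l : ℕ) :
    ∫ ω, ((∑ j, X j ω) ^ k * (starRingEnd ℂ (∑ j, X j ω)) ^ l) ∂μ =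
      if k = l then (Bcount k H : ℂ) else 0 := by
  classical
  -- a.e. each |X j| = 1
  have habs : ∀ j : Fin H, ∀ᵐ ω ∂μ, ‖X j ω‖ = 1 := by
    intro j
    have hS : MeasurableSet {z : ℂ | ‖z‖ = 1} :=
      measurableSet_eq_fun continuous_norm.measurable measurable_const
    have h1 : μ ((X j) ⁻¹' {z : ℂ | ‖z‖ = 1}) = 1 := by
      rw [← Measure.map_apply (hmeas j) hS, hunif j, uniformCircle_abs_one]
    rw [ae_iff]
    have h2 := measure_compl ((hmeas j) hS) (measure_ne_top μ _)
    rw [measure_univ, h1] at h2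
    simpa [Set.preimage, Set.compl_setOf] using h2
  have habs' : ∀ᵐ ω ∂μ, ∀ j, ‖X j ω‖ = 1 := ae_all_iff.2 habs
  -- generic integrability from a.e. bound
  have hbdd : ∀ f : Ω → ℂ, Measurable f → (∀ᵐ ω ∂μ, ‖f ω‖ ≤ 1) →
      Integrable f μ := by
    intro f hf hb
    refine Integrable.mono' (integrable_const 1) hf.aestronglyMeasurable ?_
    simpa using hb
  -- integrability of each term
  have hterm_meas : ∀ {m n : ℕ} (p : Fin m → Fin H) (q : Fin n → Fin H),
      Measurable (fun ω => (∏ i, X (p i) ω) * ∏ i, (starRingEnd ℂ) (X (q i) ω)) := by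
    intro m n p q
    apply Measurable.mul
    · exact Finset.measurable_prod _ fun i _ => hmeas (p i)
    · exact Finset.measurable_prod _ fun i _ => (Complex.continuous_conj.measurable).comp (hmeas (q i))
  have hterm_bdd : ∀ {m n : ℕ} (p : Fin m → Fin H) (q : Fin n → Fin H),
      ∀ᵐ ω ∂μ, ‖(∏ i, X (p i) ω) * ∏ i, (starRingEnd ℂ) (X (q i) ω)‖ ≤ 1 := by
    intro m n p q
    filter_upwards [habs'] with ω hω
    rw [norm_mul]
    rw [show ‖∏ i, X (p i) ω‖ = ∏ i, ‖X (p i) ω‖ from norm_prod _ _]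
    rw [show ‖∏ i, (starRingEnd ℂ) (X (q i) ω)‖ =
      ∏ i, ‖(starRingEnd ℂ) (X (q i) ω)‖ from norm_prod _ _]
    simp [Complex.norm_conj, hω]
  have hterm_int : ∀ {m n : ℕ} (p : Fin m → Fin H) (q : Fin n → Fin H),
      Integrable (fun ω => (∏ i, X (p i) ω) * ∏ i, (starRingEnd ℂ) (X (q i) ω)) μ :=
    fun p q => hbdd _ (hterm_meas p q) (hterm_bdd p q)
  -- value of each term
  have key : ∀ {m n : ℕ} (p : Fin m → Fin H) (q : Fin n → Fin H),
      ∫ ω, (∏ i, X (p i) ω) * ∏ i, (starRingEnd ℂ) (X (q i) ω) ∂μ =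
        if (∀ j, (univ.filter fun i => p i = j).card =
            (univ.filter fun i => q i = j).card) then 1 else 0 := by
    intro m n p q
    set a : Fin H → ℕ := fun j => (univ.filter fun i => p i = j).card with ha
    set b : Fin H → ℕ := fun j => (univ.filter fun i => q i = j).card with hb
    set Y : Fin H → Ω → ℂ := fun j ω => (X j ω) ^ (a j) * ((starRingEnd ℂ) (X j ω)) ^ (b j) with hY
    have h1 : ∀ ω, (∏ i, X (p i) ω) * ∏ i, (starRingEnd ℂ) (X (q i) ω) = ∏ j, Y j ω := by
      intro ω
      rw [← Finset.prod_fiberwise' univ p (fun j => X j ω),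
        ← Finset.prod_fiberwise' univ q (fun j => (starRingEnd ℂ) (X j ω)),
        ← Finset.prod_mul_distrib]
      exact Finset.prod_congr rfl fun j _ => by rw [Finset.prod_const, Finset.prod_const]
    have hYmeas : ∀ j, Measurable (Y j) := by
      intro j
      exact ((hmeas j).pow_const _).mul
        (((Complex.continuous_conj.measurable).comp (hmeas j)).pow_const _)
    have hgmeas : ∀ j, Measurable (fun z : ℂ => z ^ (a j) * ((starRingEnd ℂ) z) ^ (b j)) :=
      fun j => (measurable_id.pow_const _).mul ((Complex.continuous_conj.measurable).pow_const _)
    have hYindep : iIndepFun Y μ :=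
      hindep.comp (fun j (z : ℂ) => z ^ (a j) * ((starRingEnd ℂ) z) ^ (b j)) hgmeas
    have hYint : ∀ j, Integrable (Y j) μ := by
      intro j
      refine hbdd _ (hYmeas j) ?_
      filter_upwards [habs j] with ω hω
      simp [hY, map_mul, map_pow, Complex.norm_conj, hω]
    obtain ⟨-, hYeq⟩ := iIndep_integral_prod Y hYindep hYmeas hYint univ
    have hYval : ∀ j, ∫ ω, Y j ω ∂μ = if a j = b j then 1 else 0 := by
      intro j
      have hg : AEStronglyMeasurable (fun z : ℂ => z ^ (a j) * ((starRingEnd ℂ) z) ^ (b j))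
          (Measure.map (X j) μ) := Continuous.aestronglyMeasurable (by continuity)
      have := integral_map (μ := μ) (hmeas j).aemeasurable hg
      rw [hY]
      simp only []
      rw [← this, hunif j, circle_moment]
    simp only [h1]
    rw [hYeq]
    calc ∏ j, ∫ ω, Y j ω ∂μ = ∏ j, if a j = b j then (1:ℂ) else 0 :=
          Finset.prod_congr rfl fun j _ => hYval j
      _ = if (∀ j, a j = b j) then 1 else 0 := by
          by_cases hall : ∀ j, a j = b j
          · rw [if_pos hall]
            exact Finset.prod_eq_one fun j _ => by rw [if_pos (hall j)]
          · rw [if_neg hall]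
            push_neg at hall
            obtain ⟨j, hj⟩ := hall
            exact Finset.prod_eq_zero (mem_univ j) (by rw [if_neg hj])
  -- expand the power of the sum
  have hexpand : ∀ ω : Ω, (∑ j, X j ω) ^ k * (starRingEnd ℂ (∑ j, X j ω)) ^ l
      = ∑ p : Fin k → Fin H, ∑ q : Fin l → Fin H,
          (∏ i, X (p i) ω) * ∏ i, (starRingEnd ℂ) (X (q i) ω) := by
    intro ω
    rw [Fintype.sum_pow, map_sum, Fintype.sum_pow, Finset.sum_mul_sum]
  calc ∫ ω, ((∑ j, X j ω) ^ k * (starRingEnd ℂ (∑ j, X j ω)) ^ l) ∂μ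
      = ∫ ω, ∑ p : Fin k → Fin H, ∑ q : Fin l → Fin H,
          (∏ i, X (p i) ω) * ∏ i, (starRingEnd ℂ) (X (q i) ω) ∂μ := by
        simp only [hexpand]
    _ = ∑ p : Fin k → Fin H, ∑ q : Fin l → Fin H,
          ∫ ω, (∏ i, X (p i) ω) * ∏ i, (starRingEnd ℂ) (X (q i) ω) ∂μ := by
        rw [integral_finset_sum _ fun p _ => integrable_finset_sum _ fun q _ => hterm_int p q]
        exact Finset.sum_congr rfl fun p _ => integral_finset_sum _ fun q _ => hterm_int p q
    _ = ∑ p : Fin k → Fin H, ∑ q : Fin l → Fin H,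
          (if (∀ j, (univ.filter fun i => p i = j).card =
            (univ.filter fun i => q i = j).card) then (1:ℂ) else 0) :=
        Finset.sum_congr rfl fun p _ => Finset.sum_congr rfl fun q _ => key p q
    _ = if k = l then (Bcount k H : ℂ) else 0 := by
        rcases eq_or_ne k l with hkl | hkl
        · subst hkl
          rw [if_pos rfl]
          rw [← Finset.sum_product', Finset.univ_product_univ, Finset.sum_boole,
            Bcount_eq_filter_card]
        · rw [if_neg hkl]
          refine Finset.sum_eq_zero fun p _ => Finset.sum_eq_zero fun q _ => ?_
          rw [if_neg]
          intro hcond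
          apply hkl
          have h1 : k = ∑ j, (univ.filter fun i => p i = j).card := by
            have := Finset.card_eq_sum_card_fiberwise
              (f := p) (s := (univ : Finset (Fin k))) (t := (univ : Finset (Fin H)))
              (fun i _ => mem_univ _)
            simpa using this
          have h2 : l = ∑ j, (univ.filter fun i => q i = j).card := by
            have := Finset.card_eq_sum_card_fiberwise
              (f := q) (s := (univ : Finset (Fin l))) (t := (univ : Finset (Fin H)))
              (fun i _ => mem_univ _)
            simpa using this
          rw [h1, h2]
          exact Finset.sum_congr rfl fun j _ => hcond j
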